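/- arXiv:1410.4662 — 3 statements merged into one kernel-verified Lean document; each statement's English description precedes it below -/
import Mathlib

section
/- Let M be an invariant submanifold of a generalized Kenmotsu manifold M̄. Then the intrinsic curvature tensor R of M satisfies R(X,Y)ξ_i = Σⱼ { η^j(Y) φ²X - η^j(X) φ²Y } for all X, Y tangent to M. -/
open scoped RealInnerProductSpace

/-- Invariant submanifold of a generalized Kenmotsu manifold: the induced curvature satisfies `R(X,Y)ξᵢ = Σⱼ{ηʲ(Y)φ²X - ηʲ(X)φ²Y}`. -/
theorem invariant_submanifold_curvature_xi
    {V : Type*} [NormedAddCommGroup V] [InnerProductSpace ℝ V]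
    (s : ℕ) (φ : V →ₗ[ℝ] V) (ξ : Fin s → V) (η : Fin s → V →ₗ[ℝ] ℝ)
    (T : Submodule ℝ V)
    (Dbar D : V → V → V) (h : V →ₗ[ℝ] V →ₗ[ℝ] V)
    -- almost s-contact metric structure on the ambient manifold
    (hφ2 : ∀ X, φ (φ X) = -X + ∑ i, η i X • ξ i)
    (hηξ : ∀ i j, η i (ξ j) = if i = j then (1 : ℝ) else 0)
    (hg : ∀ X Y, ⟪φ X, φ Y⟫ = ⟪X, Y⟫ - ∑ i, η i X * η i Y)
    (hηg : ∀ i X, η i X = ⟪X, ξ i⟫)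
    -- generalized Kenmotsu condition : (∇̄_X φ) Y = Σᵢ { g(φX,Y)ξᵢ - ηⁱ(Y)φX }
    (hKen : ∀ X Y, Dbar X (φ Y) - φ (Dbar X Y) =
      ∑ i, (⟪φ X, Y⟫ • ξ i - η i Y • φ X))
    -- M is an invariant submanifold : φ preserves tangent (and normal) parts, ξᵢ tangent
    (hφT : ∀ x ∈ T, φ x ∈ T)
    (hφN : ∀ x, (∀ Z ∈ T, ⟪x, Z⟫ = 0) → ∀ Z ∈ T, ⟪φ x, Z⟫ = 0)
    (hξT : ∀ i, ξ i ∈ T)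
    -- Gauss formula : ∇̄_X Y = ∇_X Y + h(X,Y), with ∇ tangential and h normal valued
    (hGauss : ∀ X ∈ T, ∀ Y ∈ T, Dbar X Y = D X Y + h X Y)
    (hDT : ∀ X ∈ T, ∀ Y ∈ T, D X Y ∈ T)
    (hhN : ∀ X ∈ T, ∀ Y ∈ T, ∀ Z ∈ T, ⟪h X Y, Z⟫ = 0)
    (hsymm : ∀ X Y, h X Y = h Y X)
    (Rbar R : V → V → V → V) (A : V → V → V) (Dp : V → V → V)
    (hhξ : ∀ X ∈ T, ∀ i, h X (ξ i) = 0)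
    (hDξ : ∀ X ∈ T, ∀ i, D X (ξ i) = -(φ (φ X)))
    -- ambient curvature identity R̄(X,Y)ξᵢ = Σⱼ{ηʲ(Y)φ²X - ηʲ(X)φ²Y}
    (hRbarξ : ∀ X ∈ T, ∀ Y ∈ T, ∀ i, Rbar X Y (ξ i) = ∑ j, (η j Y • φ (φ X) - η j X • φ (φ Y)))
    -- Gauss–Codazzi relation between the ambient and induced curvature tensors
    (hCodazzi : ∀ X ∈ T, ∀ Y ∈ T, ∀ Z ∈ T, Rbar X Y Z = R X Y Z - A (h Y Z) X + A (h X Z) Y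
      + (Dp X (h Y Z) - h (D X Y) Z - h Y (D X Z)) - (Dp Y (h X Z) - h (D Y X) Z - h X (D Y Z)))
    (hA0 : ∀ X, A 0 X = 0)
    (hDp0 : ∀ X, Dp X 0 = 0)
    : ∀ X ∈ T, ∀ Y ∈ T, ∀ i,
      R X Y (ξ i) = ∑ j, (η j Y • φ (φ X) - η j X • φ (φ Y)) := by
  intro X hX Y hY i
  have key : ∀ W ∈ T, ∀ Z ∈ T, h W (D Z (ξ i)) = h W Z := by
    intro W hW Z hZ
    rw [hDξ Z hZ i, hφ2 Z]
    simp only [map_neg, map_add, map_sum, map_smul]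
    rw [Finset.sum_eq_zero (fun j _ => by rw [hhξ W hW j, smul_zero])]
    simp [hsymm W Z]
  have hC := hCodazzi X hX Y hY (ξ i) (hξT i)
  rw [hhξ X hX i, hhξ Y hY i, hA0, hA0, hDp0, hDp0,
      hhξ _ (hDT X hX Y hY) i, hhξ _ (hDT Y hY X hX) i,
      key Y hY X hX, key X hX Y hY, hsymm Y X, hRbarξ X hX Y hY i] at hC
  simpa using hC.symm
end

section
/- Let M be an invariant submanifold of a generalized Kenmotsu manifold M̄. Then the second fundamental form h is η-parallel (i.e. (∇_X h)(φY, φZ) = 0 for all tangent X, Y, Z) if and only if (∇_X h)(Y,Z) = -Σᵢ { η^i(Y) h(X,Z) + η^i(Z) h(X,Y) } for all tangent X, Y, Z. -/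
open scoped RealInnerProductSpace

/-- Invariant submanifold of a generalized Kenmotsu manifold: `h` is η-parallel, i.e. `(∇_X h)(φY, φZ) = 0`, iff `(∇_X h)(Y,Z) = -Σᵢ{ηⁱ(Y)h(X,Z) + ηⁱ(Z)h(X,Y)}`. -/
theorem invariant_submanifold_eta_parallel
    {V : Type*} [NormedAddCommGroup V] [InnerProductSpace ℝ V]
    (s : ℕ) (φ : V →ₗ[ℝ] V) (ξ : Fin s → V) (η : Fin s → V →ₗ[ℝ] ℝ)
    (T : Submodule ℝ V)
    (Dbar D : V → V → V) (h : V →ₗ[ℝ] V →ₗ[ℝ] V)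
    -- almost s-contact metric structure on the ambient manifold
    (hφ2 : ∀ X, φ (φ X) = -X + ∑ i, η i X • ξ i)
    (hηξ : ∀ i j, η i (ξ j) = if i = j then (1 : ℝ) else 0)
    (hg : ∀ X Y, ⟪φ X, φ Y⟫ = ⟪X, Y⟫ - ∑ i, η i X * η i Y)
    (hηg : ∀ i X, η i X = ⟪X, ξ i⟫)
    -- generalized Kenmotsu condition : (∇̄_X φ) Y = Σᵢ { g(φX,Y)ξᵢ - ηⁱ(Y)φX }
    (hKen : ∀ X Y, Dbar X (φ Y) - φ (Dbar X Y) =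
      ∑ i, (⟪φ X, Y⟫ • ξ i - η i Y • φ X))
    -- M is an invariant submanifold : φ preserves tangent (and normal) parts, ξᵢ tangent
    (hφT : ∀ x ∈ T, φ x ∈ T)
    (hφN : ∀ x, (∀ Z ∈ T, ⟪x, Z⟫ = 0) → ∀ Z ∈ T, ⟪φ x, Z⟫ = 0)
    (hξT : ∀ i, ξ i ∈ T)
    -- Gauss formula : ∇̄_X Y = ∇_X Y + h(X,Y), with ∇ tangential and h normal valued
    (hGauss : ∀ X ∈ T, ∀ Y ∈ T, Dbar X Y = D X Y + h X Y)
    (hDT : ∀ X ∈ T, ∀ Y ∈ T, D X Y ∈ T)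
    (hhN : ∀ X ∈ T, ∀ Y ∈ T, ∀ Z ∈ T, ⟪h X Y, Z⟫ = 0)
    (hsymm : ∀ X Y, h X Y = h Y X)
    (Dp : V → V → V)
    (hhξ : ∀ X ∈ T, ∀ i, h X (ξ i) = 0)
    (hDp0 : ∀ X, Dp X 0 = 0)
    (hhφφ : ∀ X ∈ T, ∀ Y ∈ T, h (φ X) (φ Y) = -(h X Y))
    (hKenInd : ∀ X ∈ T, ∀ Y ∈ T, D X (φ Y) - φ (D X Y) = ∑ i, (⟪φ X, Y⟫ • ξ i - η i Y • φ X))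
    : (∀ X ∈ T, ∀ Y ∈ T, ∀ Z ∈ T,
        Dp X (h (φ Y) (φ Z)) - h (D X (φ Y)) (φ Z) - h (φ Y) (D X (φ Z)) = 0) ↔
      (∀ X ∈ T, ∀ Y ∈ T, ∀ Z ∈ T,
        Dp X (h Y Z) - h (D X Y) Z - h Y (D X Z) =
          -∑ i, (η i Y • h X Z + η i Z • h X Y)) := by
  -- Preliminary facts
  have hξξ : ∀ i, ⟪ξ i, ξ i⟫ = (1 : ℝ) := by
    intro i
    have := hηg i (ξ i)
    rw [hηξ] at this
    simpa using this.symm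
  have hφξ : ∀ i, φ (ξ i) = 0 := by
    intro i
    have hz : ⟪φ (ξ i), φ (ξ i)⟫ = 0 := by
      rw [hg, hξξ]
      have : (∑ j, η j (ξ i) * η j (ξ i)) = 1 := by
        simp [hηξ, ite_mul, Finset.sum_ite_eq]
      rw [this]; ring
    exact inner_self_eq_zero.mp hz
  have hηφ : ∀ j Y, η j (φ Y) = 0 := by
    intro j Y
    have h1 : φ (φ (φ Y)) = -(φ Y) + ∑ i, η i (φ Y) • ξ i := hφ2 (φ Y)
    have h2 : φ (φ (φ Y)) = -(φ Y) := by
      have := congrArg φ (hφ2 Y)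
      rw [map_add, map_neg, map_sum] at this
      simp only [map_smul, hφξ, smul_zero, Finset.sum_const_zero, add_zero] at this
      exact this
    have h3 : (∑ i, η i (φ Y) • ξ i) = 0 := by
      have := h2.symm.trans h1
      exact (add_eq_left.mp this.symm)
    have h4 := congrArg (η j) h3
    rw [map_sum, map_zero] at h4
    simp only [map_smul, smul_eq_mul, hηξ, mul_ite, mul_one, mul_zero,
      Finset.sum_ite_eq, Finset.mem_univ, if_true] at h4
    exact h4
  have hhξ' : ∀ W ∈ T, ∀ i, h (ξ i) W = 0 := fun W hW i => by
    rw [hsymm]; exact hhξ W hW i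
  constructor
  · -- forward direction
    intro H X hX Y hY Z hZ
    have hφY : φ Y ∈ T := hφT _ hY
    have hφZ : φ Z ∈ T := hφT _ hZ
    have hφφY : φ (φ Y) ∈ T := hφT _ hφY
    have hφφZ : φ (φ Z) ∈ T := hφT _ hφZ
    have keyD : ∀ U ∈ T, D X (φ U) = φ (D X U) + ∑ i, (⟪φ X, U⟫ • ξ i - η i U • φ X) := by
      intro U hU
      have := hKenInd X hX U hU
      linear_combination (norm := abel) this
    -- h(φφY, φφZ) = h Y Z
    have e1 : h (φ (φ Y)) (φ (φ Z)) = h Y Z := by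
      rw [hφ2 Y, hφ2 Z]
      simp only [map_add, map_neg, map_sum, map_smul, LinearMap.add_apply,
        LinearMap.neg_apply, LinearMap.sum_apply, LinearMap.smul_apply]
      simp [hhξ' _ hZ, hhξ' _ (hξT _), hhξ _ hY, hhξ _ (hξT _)]
    -- h(D X (φφY)) (φφZ) = h (D X Y) Z - Σ ηⁱ(Y) • h X Z
    have e2a : h (D X (φ Y)) (φ Z) = -(h (D X Y) Z) + ∑ i, η i Y • h X Z := by
      rw [keyD Y hY]
      simp only [map_add, map_sum, map_sub, map_smul, LinearMap.add_apply,
        LinearMap.sum_apply, LinearMap.sub_apply, LinearMap.smul_apply]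
      rw [hhφφ (D X Y) (hDT X hX Y hY) Z hZ]
      congr 1
      refine Finset.sum_congr rfl (fun i _ => ?_)
      rw [hhξ' _ hφZ, hhφφ X hX Z hZ]
      simp
    have e2 : h (D X (φ (φ Y))) (φ (φ Z)) = h (D X Y) Z - ∑ i, η i Y • h X Z := by
      rw [keyD (φ Y) hφY]
      simp only [map_add, map_sum, map_sub, map_smul, LinearMap.add_apply,
        LinearMap.sum_apply, LinearMap.sub_apply, LinearMap.smul_apply]
      rw [hhφφ (D X (φ Y)) (hDT X hX _ hφY) (φ Z) hφZ, e2a]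
      have : ∀ i, ⟪φ X, φ Y⟫ • h (ξ i) (φ (φ Z)) - η i (φ Y) • h (φ X) (φ (φ Z)) = 0 := by
        intro i
        rw [hhξ' _ hφφZ, hηφ]
        simp
      rw [Finset.sum_congr rfl (fun i _ => this i)]
      simp only [Finset.sum_const_zero, add_zero]
      abel
    -- h(φφY) (D X (φφZ)) = h Y (D X Z) - Σ ηⁱ(Z) • h X Y
    have e3a : h (φ Y) (D X (φ Z)) = -(h Y (D X Z)) + ∑ i, η i Z • h X Y := by
      rw [keyD Z hZ]
      simp only [map_add, map_sum, map_sub, map_smul]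
      rw [hhφφ Y hY (D X Z) (hDT X hX Z hZ)]
      congr 1
      refine Finset.sum_congr rfl (fun i _ => ?_)
      rw [hhξ _ hφY, hhφφ Y hY X hX, hsymm Y X]
      simp
    have e3 : h (φ (φ Y)) (D X (φ (φ Z))) = h Y (D X Z) - ∑ i, η i Z • h X Y := by
      rw [keyD (φ Z) hφZ]
      simp only [map_add, map_sum, map_sub, map_smul]
      rw [hhφφ (φ Y) hφY (D X (φ Z)) (hDT X hX _ hφZ), e3a]
      have : ∀ i, ⟪φ X, φ Z⟫ • h (φ (φ Y)) (ξ i) - η i (φ Z) • h (φ (φ Y)) (φ X) = 0 := by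
        intro i
        rw [hhξ _ hφφY, hηφ]
        simp
      rw [Finset.sum_congr rfl (fun i _ => this i)]
      simp only [Finset.sum_const_zero, add_zero]
      abel
    have := H X hX (φ Y) hφY (φ Z) hφZ
    rw [e1, e2, e3] at this
    rw [Finset.sum_add_distrib]
    linear_combination (norm := abel) this
  · -- reverse direction
    intro H X hX Y hY Z hZ
    have := H X hX (φ Y) (hφT _ hY) (φ Z) (hφT _ hZ)
    simp only [hηφ, zero_smul, add_zero, zero_add, Finset.sum_const_zero, neg_zero] at this
    exact this
end

section
/- Let M be an invariant submanifold of a generalized Kenmotsu manifold M̄. Then for any tangent vector field X: g(R(X, φX)φX, X) = g(R̄(X, φX)φX, X) - 2 g(h(X,X), h(X,X)), relating the φ-sectional curvatures of M and M̄. -/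
open scoped RealInnerProductSpace

/-- Invariant submanifold of a generalized Kenmotsu manifold: `g(R(X,φX)φX,X) = g(R̄(X,φX)φX,X) - 2 g(h(X,X),h(X,X))`. -/
theorem invariant_submanifold_phi_sectional
    {V : Type*} [NormedAddCommGroup V] [InnerProductSpace ℝ V]
    (s : ℕ) (φ : V →ₗ[ℝ] V) (ξ : Fin s → V) (η : Fin s → V →ₗ[ℝ] ℝ)
    (T : Submodule ℝ V)
    (Dbar D : V → V → V) (h : V →ₗ[ℝ] V →ₗ[ℝ] V)
    -- almost s-contact metric structure on the ambient manifold
    (hφ2 : ∀ X, φ (φ X) = -X + ∑ i, η i X • ξ i)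
    (hηξ : ∀ i j, η i (ξ j) = if i = j then (1 : ℝ) else 0)
    (hg : ∀ X Y, ⟪φ X, φ Y⟫ = ⟪X, Y⟫ - ∑ i, η i X * η i Y)
    (hηg : ∀ i X, η i X = ⟪X, ξ i⟫)
    -- generalized Kenmotsu condition : (∇̄_X φ) Y = Σᵢ { g(φX,Y)ξᵢ - ηⁱ(Y)φX }
    (hKen : ∀ X Y, Dbar X (φ Y) - φ (Dbar X Y) =
      ∑ i, (⟪φ X, Y⟫ • ξ i - η i Y • φ X))
    -- M is an invariant submanifold : φ preserves tangent (and normal) parts, ξᵢ tangent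
    (hφT : ∀ x ∈ T, φ x ∈ T)
    (hφN : ∀ x, (∀ Z ∈ T, ⟪x, Z⟫ = 0) → ∀ Z ∈ T, ⟪φ x, Z⟫ = 0)
    (hξT : ∀ i, ξ i ∈ T)
    -- Gauss formula : ∇̄_X Y = ∇_X Y + h(X,Y), with ∇ tangential and h normal valued
    (hGauss : ∀ X ∈ T, ∀ Y ∈ T, Dbar X Y = D X Y + h X Y)
    (hDT : ∀ X ∈ T, ∀ Y ∈ T, D X Y ∈ T)
    (hhN : ∀ X ∈ T, ∀ Y ∈ T, ∀ Z ∈ T, ⟪h X Y, Z⟫ = 0)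
    (hsymm : ∀ X Y, h X Y = h Y X)
    (Rbar R : V → V → V → V)
    -- Gauss equation
    (hGaussEq : ∀ X ∈ T, ∀ Y ∈ T, ∀ Z ∈ T, ∀ W ∈ T,
      ⟪Rbar X Y Z, W⟫ = ⟪R X Y Z, W⟫ + ⟪h Y W, h X Z⟫ - ⟪h X W, h Y Z⟫)
    (hhφφ : ∀ X ∈ T, ∀ Y ∈ T, h (φ X) (φ Y) = -(h X Y))
    (hhφ : ∀ X ∈ T, ∀ Y ∈ T, h (φ X) Y = φ (h X Y))
    (hφiso : ∀ U W, (∀ Z ∈ T, ⟪U, Z⟫ = 0) → (∀ Z ∈ T, ⟪W, Z⟫ = 0) → ⟪φ U, φ W⟫ = ⟪U, W⟫)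
    : ∀ X ∈ T,
      ⟪R X (φ X) (φ X), X⟫ = ⟪Rbar X (φ X) (φ X), X⟫ - 2 * ⟪h X X, h X X⟫ := by
  intro X hX
  have hφX : φ X ∈ T := hφT X hX
  have hGE := hGaussEq X hX (φ X) hφX (φ X) hφX X hX
  have h1 : h (φ X) X = φ (h X X) := hhφ X hX X hX
  have h2 : h X (φ X) = φ (h X X) := by rw [hsymm]; exact h1
  have h3 : h (φ X) (φ X) = -(h X X) := hhφφ X hX X hX
  have hN : ∀ Z ∈ T, ⟪h X X, Z⟫ = 0 := fun Z hZ => hhN X hX X hX Z hZ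
  have h4 : ⟪φ (h X X), φ (h X X)⟫ = ⟪h X X, h X X⟫ := hφiso _ _ hN hN
  rw [h1, h2, h3] at hGE
  simp only [inner_neg_right] at hGE
  rw [h4] at hGE
  linarith
end
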